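/- Let s ≥ 2, m ≥ 0, k ≥ 1 and q ≥ 2. Let R_q(k,s,m) be the number of 3q-tuples of polynomials (Y_1,Z_1,U_1,…,Y_q,Z_q,U_q) over F_2 with deg Y_i ≤ k−1, deg Z_i ≤ s−1, deg U_i ≤ s+m−1 for all i (the zero polynomial is allowed), satisfying Y_1Z_1 + ⋯ + Y_qZ_q = 0 and Y_1U_1 + ⋯ + Y_qU_q = 0 in F_2[T]. Then 2^k · R_q(k,s,m) = 4 · Σ_{i=0}^{min(2s+m,k)} Γ_i^{[s,s+m]×k} · 2^{(2s+m+k)(q−1) − q·i}, where every exponent (2s+m+k)(q−1) − q·i appearing in the sum is nonnegative. -/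

import Mathlib

open Matrix

/-- The `a × k` Hankel (persymmetric) matrix over `F_2` whose `(i,j)` entry is `α (i+j)`. -/
def hankel (a k : ℕ) (α : Fin (a + k - 1) → ZMod 2) :
    Matrix (Fin a) (Fin k) (ZMod 2) :=
  Matrix.of fun i j => α ⟨(i : ℕ) + (j : ℕ), by have := i.isLt; have := j.isLt; omega⟩

/-- `Γ_i^{[a,b]×k}` : the number of pairs `(α, β)` such that the `(a+b) × k` matrix obtained
by stacking the `a × k` Hankel matrix of `α` on top of the `b × k` Hankel matrix of `β`
has rank `i` over `F_2`. -/
noncomputable def Gamma (a b k i : ℕ) : ℕ :=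
  Nat.card {p : (Fin (a + k - 1) → ZMod 2) × (Fin (b + k - 1) → ZMod 2) //
    (Matrix.fromRows (hankel a k p.1) (hankel b k p.2)).rank = i}

/-- `R_q(k,s,m)` : the number of `3q`-tuples of polynomials `(Y_i, Z_i, U_i)` over `F_2` with
`deg Y_i ≤ k-1`, `deg Z_i ≤ s-1`, `deg U_i ≤ s+m-1` (the zero polynomial being allowed),
satisfying `Σ Y_i Z_i = 0` and `Σ Y_i U_i = 0` in `F_2[T]`. -/
noncomputable def Rq (q k s m : ℕ) : ℕ :=
  Nat.card {f : Fin q → Polynomial (ZMod 2) × Polynomial (ZMod 2) × Polynomial (ZMod 2) //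
    (∀ i, (f i).1.degree < (k : WithBot ℕ) ∧ (f i).2.1.degree < (s : WithBot ℕ) ∧
      (f i).2.2.degree < ((s + m : ℕ) : WithBot ℕ)) ∧
    (∑ i, (f i).1 * (f i).2.1 = 0) ∧ (∑ i, (f i).1 * (f i).2.2 = 0)}

/-! ### Auxiliary material -/

open Polynomial in
/-- The polynomial with coefficient vector `v`. -/
noncomputable def Pv (n : ℕ) (v : Fin n → ZMod 2) : Polynomial (ZMod 2) :=
  ∑ j : Fin n, monomial (j : ℕ) (v j)

open Polynomial in
lemma coeff_Pv (n : ℕ) (v : Fin n → ZMod 2) (a : ℕ) :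
    (Pv n v).coeff a = if h : a < n then v ⟨a, h⟩ else 0 := by
  rw [Pv, finset_sum_coeff]
  split_ifs with h
  · rw [Finset.sum_eq_single (⟨a, h⟩ : Fin n)]
    · simp
    · intro b _ hb
      rw [coeff_monomial, if_neg]
      exact fun hc => hb (by ext; exact hc)
    · simp
  · apply Finset.sum_eq_zero
    intro b _
    rw [coeff_monomial, if_neg]
    exact fun hc => h (hc ▸ b.isLt)

open Polynomial in
lemma degree_Pv (n : ℕ) (v : Fin n → ZMod 2) : (Pv n v).degree < (n : WithBot ℕ) := by
  apply lt_of_le_of_lt (degree_sum_le _ _)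
  rw [Finset.sup_lt_iff (by exact_mod_cast WithBot.bot_lt_coe n)]
  intro b _
  exact lt_of_le_of_lt (degree_monomial_le _ _) (by exact_mod_cast b.isLt)

open Polynomial in
lemma Pv_coeff (n : ℕ) (p : Polynomial (ZMod 2)) (h : p.degree < (n : WithBot ℕ)) :
    Pv n (fun j => p.coeff j) = p := by
  ext a
  rw [coeff_Pv]
  split_ifs with ha
  · rfl
  · exact (coeff_eq_zero_of_degree_lt (lt_of_lt_of_le h (by exact_mod_cast not_lt.1 ha))).symm

open Polynomial in
/-- The matrix of the linear map `z ↦ coefficients of ∑ Y_i Z_i`. -/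
noncomputable def convMat (k t q : ℕ) (y : Fin q → Fin k → ZMod 2) :
    Matrix (Fin (t + k - 1)) (Fin q × Fin t) (ZMod 2) :=
  Matrix.of fun n p => (Pv k (y p.1) * Polynomial.X ^ (p.2 : ℕ)).coeff (n : ℕ)

open Polynomial in
lemma convMat_mulVec (k t q : ℕ) (y : Fin q → Fin k → ZMod 2)
    (z : Fin q → Fin t → ZMod 2) (n : Fin (t + k - 1)) :
    (convMat k t q y *ᵥ (fun p => z p.1 p.2)) n
      = (∑ i, Pv k (y i) * Pv t (z i)).coeff (n : ℕ) := by
  rw [mulVec, finset_sum_coeff]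
  have : ∀ i : Fin q, (Pv k (y i) * Pv t (z i)).coeff (n : ℕ)
      = ∑ b : Fin t, (Pv k (y i) * Polynomial.X ^ (b : ℕ)).coeff (n : ℕ) * z i b := by
    intro i
    conv_lhs => rw [show Pv t (z i) = ∑ b : Fin t, monomial (b : ℕ) (z i b) from rfl,
      Finset.mul_sum, finset_sum_coeff]
    congr 1; funext b
    have : monomial (b : ℕ) (z i b) = Polynomial.C (z i b) * Polynomial.X ^ (b : ℕ) := by
      rw [Polynomial.C_mul_X_pow_eq_monomial]
    rw [this, show Pv k (y i) * (Polynomial.C (z i b) * Polynomial.X ^ (b:ℕ))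
        = (Pv k (y i) * Polynomial.X ^ (b:ℕ)) * Polynomial.C (z i b) by ring,
      coeff_mul_C]
  simp only [this]
  rw [dotProduct, Fintype.sum_prod_type]
  rfl

open Polynomial in
lemma sum_prod_coeff_hi (k t q : ℕ) (y : Fin q → Fin k → ZMod 2)
    (z : Fin q → Fin t → ZMod 2) (a : ℕ) (ha : ¬ a < t + k - 1) :
    (∑ i, Pv k (y i) * Pv t (z i)).coeff a = 0 := by
  rw [finset_sum_coeff]
  apply Finset.sum_eq_zero
  intro i _
  rw [coeff_mul]
  apply Finset.sum_eq_zero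
  intro p hp
  rw [Finset.HasAntidiagonal.mem_antidiagonal] at hp
  rw [coeff_Pv, coeff_Pv]
  split_ifs with h1 h2
  · omega
  all_goals ring

open Polynomial in
lemma convMat_cond_iff (k t q : ℕ) (y : Fin q → Fin k → ZMod 2)
    (z : Fin q → Fin t → ZMod 2) :
    (∑ i, Pv k (y i) * Pv t (z i) = 0) ↔
      convMat k t q y *ᵥ (fun p => z p.1 p.2) = 0 := by
  constructor
  · intro h
    funext n
    rw [convMat_mulVec, h]
    simp
  · intro h
    ext a
    rw [coeff_zero]
    by_cases ha : a < t + k - 1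
    · have := congrFun h ⟨a, ha⟩
      rw [convMat_mulVec] at this
      simpa using this
    · exact sum_prod_coeff_hi k t q y z a ha

open Polynomial in
lemma convMat_transpose_cond_iff (k t q : ℕ) (y : Fin q → Fin k → ZMod 2)
    (α : Fin (t + k - 1) → ZMod 2) :
    ((convMat k t q y)ᵀ *ᵥ α = 0) ↔ ∀ i, hankel t k α *ᵥ y i = 0 := by
  have key : ∀ (i : Fin q) (b : Fin t),
      ((convMat k t q y)ᵀ *ᵥ α) (i, b) = (hankel t k α *ᵥ y i) b := by
    intro i b
    have hlt : ∀ a : Fin k, (b : ℕ) + (a : ℕ) < t + k - 1 := by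
      intro a; have := a.isLt; have := b.isLt; omega
    rw [mulVec, dotProduct]
    conv_rhs => rw [mulVec, dotProduct]
    simp only [hankel, of_apply]
    have : ∀ n : Fin (t + k - 1), (convMat k t q y)ᵀ (i, b) n * α n
        = (if (b:ℕ) ≤ (n:ℕ) then (if h : (n:ℕ) - (b:ℕ) < k then y i ⟨(n:ℕ)-(b:ℕ), h⟩ else 0) else 0) * α n := by
      intro n
      rw [transpose_apply, convMat, of_apply, coeff_mul_X_pow', coeff_Pv]
    simp only [this]
    set e : Fin k → Fin (t + k - 1) := fun a => ⟨(b:ℕ) + (a:ℕ), hlt a⟩ with he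
    rw [show (Finset.univ : Finset (Fin (t + k - 1)))
        = Finset.image e Finset.univ ∪ (Finset.univ \ Finset.image e Finset.univ) by
          rw [Finset.union_sdiff_of_subset (Finset.subset_univ _)],
      Finset.sum_union (Finset.disjoint_sdiff)]
    have hzero : ∑ n ∈ (Finset.univ \ Finset.image e Finset.univ),
        (if (b:ℕ) ≤ (n:ℕ) then (if h : (n:ℕ) - (b:ℕ) < k then y i ⟨(n:ℕ)-(b:ℕ), h⟩ else 0) else 0) * α n = 0 := by
      apply Finset.sum_eq_zero
      intro n hn
      rw [Finset.mem_sdiff, Finset.mem_image] at hn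
      split_ifs with h1 h2
      · exfalso
        apply hn.2
        refine ⟨⟨(n:ℕ) - (b:ℕ), h2⟩, Finset.mem_univ _, ?_⟩
        ext; simp [he]; omega
      · ring
      · ring
    rw [hzero, add_zero, Finset.sum_image (by
      intro a1 _ a2 _ hea
      have : (b:ℕ) + (a1:ℕ) = (b:ℕ) + (a2:ℕ) := congrArg Fin.val hea
      ext; omega)]
    apply Finset.sum_congr rfl
    intro a _
    have h1 : (b:ℕ) ≤ ((e a : Fin (t+k-1)) : ℕ) := by simp [he]
    have h2 : ((e a : Fin (t+k-1)) : ℕ) - (b:ℕ) = (a:ℕ) := by simp [he]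
    rw [if_pos h1, dif_pos (h2 ▸ a.isLt), mul_comm]
    congr 1
    exact congrArg (y i) (Fin.ext h2)
  constructor
  · intro h i
    funext b
    rw [← key i b, h]
    simp
  · intro h
    funext p
    rw [key p.1 p.2, h p.1]
    simp

lemma card_ker_eq {ι κ : Type*} [Fintype ι] [Fintype κ] [DecidableEq ι] [DecidableEq κ]
    (M : Matrix κ ι (ZMod 2)) :
    Nat.card {x : ι → ZMod 2 // M *ᵥ x = 0} = 2 ^ (Fintype.card ι - M.rank) ∧
      M.rank ≤ Fintype.card ι := by
  have h1 : Nat.card {x : ι → ZMod 2 // M *ᵥ x = 0}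
      = Nat.card (LinearMap.ker M.mulVecLin) := by
    apply Nat.card_congr
    apply Equiv.subtypeEquivRight
    intro x
    simp [LinearMap.mem_ker]
  haveI : Fintype (LinearMap.ker M.mulVecLin) := Fintype.ofFinite _
  have h2 : Nat.card (LinearMap.ker M.mulVecLin)
      = 2 ^ Module.finrank (ZMod 2) (LinearMap.ker M.mulVecLin) := by
    rw [Nat.card_eq_fintype_card, Module.card_eq_pow_finrank (K := ZMod 2), ZMod.card]
  have h3 := LinearMap.finrank_range_add_finrank_ker M.mulVecLin
  have h4 : Module.finrank (ZMod 2) (ι → ZMod 2) = Fintype.card ι := by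
    simp [Module.finrank_pi]
  rw [h4] at h3
  have hr : M.rank = Module.finrank (ZMod 2) (LinearMap.range M.mulVecLin) := rfl
  constructor
  · rw [h1, h2, hr]
    congr 1
    omega
  · rw [hr]; omega

/-- The key duality step: counting `z`-solutions versus counting Hankel-kernel conditions. -/
lemma step3 (k t q : ℕ) (y : Fin q → Fin k → ZMod 2) :
    Nat.card {z : Fin q → Fin t → ZMod 2 // ∑ i, Pv k (y i) * Pv t (z i) = 0} * 2 ^ (t + k - 1)
      = Nat.card {α : Fin (t + k - 1) → ZMod 2 // ∀ i, hankel t k α *ᵥ y i = 0} * 2 ^ (q * t) := by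
  set M := convMat k t q y with hM
  have e1 : Nat.card {z : Fin q → Fin t → ZMod 2 // ∑ i, Pv k (y i) * Pv t (z i) = 0}
      = Nat.card {zf : Fin q × Fin t → ZMod 2 // M *ᵥ zf = 0} := by
    apply Nat.card_congr
    exact ⟨fun z => ⟨fun p => z.1 p.1 p.2, (convMat_cond_iff k t q y z.1).1 z.2⟩,
      fun zf => ⟨fun i b => zf.1 (i, b), (convMat_cond_iff k t q y _).2 zf.2⟩,
      fun z => rfl, fun zf => rfl⟩
  have e2 : Nat.card {α : Fin (t + k - 1) → ZMod 2 // ∀ i, hankel t k α *ᵥ y i = 0}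
      = Nat.card {α : Fin (t + k - 1) → ZMod 2 // Mᵀ *ᵥ α = 0} :=
    Nat.card_congr (Equiv.subtypeEquivRight fun α => (convMat_transpose_cond_iff k t q y α).symm)
  obtain ⟨hz, hzle⟩ := card_ker_eq M
  obtain ⟨ha, hale⟩ := card_ker_eq Mᵀ
  have hc1 : Fintype.card (Fin q × Fin t) = q * t := by simp
  have hc2 : Fintype.card (Fin (t + k - 1)) = t + k - 1 := by simp
  rw [hc1] at hz hzle
  rw [hc2, Matrix.rank_transpose] at ha hale
  rw [e1, e2, hz, ha, ← pow_add, ← pow_add]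
  congr 1
  clear_value M
  clear hM e1 e2 hz ha
  generalize M.rank = r at hzle hale ⊢
  omega

lemma natCard_subtype_eq_sum {γ : Type*} [Fintype γ] (P : γ → Prop) [DecidablePred P] :
    Nat.card {x // P x} = ∑ x, if P x then 1 else 0 := by
  rw [Nat.card_eq_fintype_card, Fintype.card_subtype, Finset.card_filter]

lemma card_split {A B C : Type*} [Fintype A] [Fintype B] [Fintype C]
    (P : A → B → Prop) (Q : A → C → Prop) :
    Nat.card {v : A × B × C // P v.1 v.2.1 ∧ Q v.1 v.2.2}
      = ∑ a : A, Nat.card {b // P a b} * Nat.card {c // Q a c} := by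
  classical
  rw [natCard_subtype_eq_sum, Fintype.sum_prod_type]
  refine Finset.sum_congr rfl fun a _ => ?_
  rw [Fintype.sum_prod_type, natCard_subtype_eq_sum, natCard_subtype_eq_sum,
    Finset.sum_mul_sum]
  refine Finset.sum_congr rfl fun b _ => Finset.sum_congr rfl fun c _ => ?_
  by_cases h1 : P a b <;> by_cases h2 : Q a c <;> simp [h1, h2]

lemma card_prod_split {A B : Type*} [Fintype A] [Fintype B] (P : A → Prop) (Q : B → Prop) :
    Nat.card {a // P a} * Nat.card {b // Q b} = Nat.card {p : A × B // P p.1 ∧ Q p.2} := by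
  classical
  rw [natCard_subtype_eq_sum, natCard_subtype_eq_sum, natCard_subtype_eq_sum,
    Fintype.sum_prod_type, Finset.sum_mul_sum]
  refine Finset.sum_congr rfl fun a _ => Finset.sum_congr rfl fun b _ => ?_
  by_cases h1 : P a <;> by_cases h2 : Q b <;> simp [h1, h2]

lemma card_swap {A B : Type*} [Fintype A] [Fintype B] (R : A → B → Prop) :
    ∑ a : A, Nat.card {b // R a b} = ∑ b : B, Nat.card {a // R a b} := by
  classical
  simp only [natCard_subtype_eq_sum]
  rw [Finset.sum_comm]

lemma sum_elim_zero_iff {n1 n2 : Type*} (f : n1 → ZMod 2) (g : n2 → ZMod 2) :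
    Sum.elim f g = 0 ↔ f = 0 ∧ g = 0 := by
  constructor
  · intro h
    exact ⟨funext fun x => congrFun h (Sum.inl x), funext fun x => congrFun h (Sum.inr x)⟩
  · rintro ⟨h1, h2⟩
    subst h1; subst h2
    ext x
    cases x <;> rfl

theorem Rq_eq_sum_Gamma (s m k q : ℕ) (hs : 2 ≤ s) (hk : 1 ≤ k) (hq : 2 ≤ q) :
    2 ^ k * Rq q k s m =
      4 * ∑ i ∈ Finset.range (min (2 * s + m) k + 1),
        Gamma s (s + m) k i * 2 ^ ((2 * s + m + k) * (q - 1) - q * i) ∧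
    ∀ i ∈ Finset.range (min (2 * s + m) k + 1), q * i ≤ (2 * s + m + k) * (q - 1) := by
  classical
  -- Part 2: the exponents are nonnegative.
  have key2 : ∀ i ∈ Finset.range (min (2 * s + m) k + 1), q * i ≤ (2 * s + m + k) * (q - 1) := by
    intro i hi
    rw [Finset.mem_range] at hi
    have hi1 : i ≤ 2 * s + m := by omega
    have hi2 : i ≤ k := by omega
    obtain ⟨q', rfl⟩ : ∃ q', q = q' + 1 := ⟨q - 1, by omega⟩
    have h1 : 1 ≤ q' := by omega
    calc (q' + 1) * i = q' * i + i := by ring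
      _ ≤ q' * (2 * s + m) + k := add_le_add (Nat.mul_le_mul_left q' hi1) hi2
      _ ≤ q' * (2 * s + m) + q' * k := by
          exact Nat.add_le_add_left (Nat.le_mul_of_pos_left k h1) _
      _ = (2 * s + m + k) * ((q' + 1) - 1) := by
          rw [Nat.add_sub_cancel]; ring
  refine ⟨?_, key2⟩
  -- Step A: translate polynomials to coefficient vectors.
  have stepA : Rq q k s m = Nat.card {v : (Fin q → Fin k → ZMod 2) ×
      (Fin q → Fin s → ZMod 2) × (Fin q → Fin (s + m) → ZMod 2) //
      (∑ i, Pv k (v.1 i) * Pv s (v.2.1 i) = 0) ∧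
      (∑ i, Pv k (v.1 i) * Pv (s + m) (v.2.2 i) = 0)} := by
    apply Nat.card_congr
    refine ⟨fun f => ⟨⟨fun i j => (f.1 i).1.coeff j, fun i j => (f.1 i).2.1.coeff j,
        fun i j => (f.1 i).2.2.coeff j⟩, by
          constructor
          · rw [Finset.sum_congr rfl (fun i _ => by
              rw [Pv_coeff _ _ (f.2.1 i).1, Pv_coeff _ _ (f.2.1 i).2.1])]
            exact f.2.2.1
          · rw [Finset.sum_congr rfl (fun i _ => by
              rw [Pv_coeff _ _ (f.2.1 i).1, Pv_coeff _ _ (f.2.1 i).2.2])]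
            exact f.2.2.2⟩,
      fun v => ⟨fun i => (Pv k (v.1.1 i), Pv s (v.1.2.1 i), Pv (s + m) (v.1.2.2 i)),
        fun i => ⟨degree_Pv _ _, degree_Pv _ _, degree_Pv _ _⟩, v.2.1, v.2.2⟩,
      ?_, ?_⟩
    · intro f
      apply Subtype.ext
      funext i
      exact Prod.ext (Pv_coeff _ _ (f.2.1 i).1)
        (Prod.ext (Pv_coeff _ _ (f.2.1 i).2.1) (Pv_coeff _ _ (f.2.1 i).2.2))
    · intro v
      apply Subtype.ext
      refine Prod.ext ?_ (Prod.ext ?_ ?_) <;>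
        · funext i j
          simp only
          rw [coeff_Pv, dif_pos j.isLt]
  -- Step B: fiberwise decomposition over `y`.
  have stepB : Rq q k s m = ∑ y : Fin q → Fin k → ZMod 2,
      Nat.card {z : Fin q → Fin s → ZMod 2 // ∑ i, Pv k (y i) * Pv s (z i) = 0} *
      Nat.card {u : Fin q → Fin (s + m) → ZMod 2 // ∑ i, Pv k (y i) * Pv (s + m) (u i) = 0} :=
    stepA.trans (card_split (A := Fin q → Fin k → ZMod 2) (B := Fin q → Fin s → ZMod 2)
      (C := Fin q → Fin (s + m) → ZMod 2) (fun y z => ∑ i, Pv k (y i) * Pv s (z i) = 0)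
      (fun y u => ∑ i, Pv k (y i) * Pv (s + m) (u i) = 0))
  -- Step C: dualize both counts via `step3`.
  have hsum : Rq q k s m * (2 ^ (s + k - 1) * 2 ^ (s + m + k - 1))
      = (∑ y : Fin q → Fin k → ZMod 2,
          Nat.card {α : Fin (s + k - 1) → ZMod 2 // ∀ i, hankel s k α *ᵥ y i = 0} *
          Nat.card {β : Fin (s + m + k - 1) → ZMod 2 // ∀ i, hankel (s + m) k β *ᵥ y i = 0})
        * (2 ^ (q * s) * 2 ^ (q * (s + m))) := by
    rw [stepB, Finset.sum_mul, Finset.sum_mul]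
    refine Finset.sum_congr rfl fun y _ => ?_
    have h1 := step3 k s q y
    have h2 := step3 k (s + m) q y
    calc Nat.card {z : Fin q → Fin s → ZMod 2 // ∑ i, Pv k (y i) * Pv s (z i) = 0} *
          Nat.card {u : Fin q → Fin (s + m) → ZMod 2 // ∑ i, Pv k (y i) * Pv (s + m) (u i) = 0} *
          (2 ^ (s + k - 1) * 2 ^ (s + m + k - 1))
        = (Nat.card {z : Fin q → Fin s → ZMod 2 // ∑ i, Pv k (y i) * Pv s (z i) = 0}
            * 2 ^ (s + k - 1)) *
          (Nat.card {u : Fin q → Fin (s + m) → ZMod 2 // ∑ i, Pv k (y i) * Pv (s + m) (u i) = 0}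
            * 2 ^ ((s + m) + k - 1)) := by ring
      _ = (Nat.card {α : Fin (s + k - 1) → ZMod 2 // ∀ i, hankel s k α *ᵥ y i = 0} * 2 ^ (q * s)) *
          (Nat.card {β : Fin ((s + m) + k - 1) → ZMod 2 // ∀ i, hankel (s + m) k β *ᵥ y i = 0}
            * 2 ^ (q * (s + m))) := by rw [h1, h2]
      _ = _ := by ring
  -- Step D: merge the two Hankel-kernel counts into one over pairs.
  have hprod : ∀ y : Fin q → Fin k → ZMod 2,
      Nat.card {α : Fin (s + k - 1) → ZMod 2 // ∀ i, hankel s k α *ᵥ y i = 0} *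
      Nat.card {β : Fin (s + m + k - 1) → ZMod 2 // ∀ i, hankel (s + m) k β *ᵥ y i = 0}
      = Nat.card {p : (Fin (s + k - 1) → ZMod 2) × (Fin (s + m + k - 1) → ZMod 2) //
          ∀ i, Matrix.fromRows (hankel s k p.1) (hankel (s + m) k p.2) *ᵥ y i = 0} := by
    intro y
    rw [card_prod_split (A := Fin (s + k - 1) → ZMod 2) (B := Fin (s + m + k - 1) → ZMod 2)
      (fun α => ∀ i, hankel s k α *ᵥ y i = 0) (fun β => ∀ i, hankel (s + m) k β *ᵥ y i = 0)]
    apply Nat.card_congr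
    apply Equiv.subtypeEquivRight
    intro p
    constructor
    · rintro ⟨h1, h2⟩ i
      rw [Matrix.fromRows_mulVec, h1 i, h2 i]
      exact (sum_elim_zero_iff (0 : Fin s → ZMod 2) 0).2 ⟨rfl, rfl⟩
    · intro h
      constructor <;> intro i <;>
        · have := h i
          rw [Matrix.fromRows_mulVec, sum_elim_zero_iff] at this
          tauto
  -- Step E: swap the order of summation.
  have hswap := card_swap (A := Fin q → Fin k → ZMod 2)
    (B := (Fin (s + k - 1) → ZMod 2) × (Fin (s + m + k - 1) → ZMod 2))
    (fun y p => ∀ i, Matrix.fromRows (hankel s k p.1) (hankel (s + m) k p.2) *ᵥ y i = 0)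
  -- Step F: count the `y`'s for a fixed pair `p`.
  have hker : ∀ p : (Fin (s + k - 1) → ZMod 2) × (Fin (s + m + k - 1) → ZMod 2),
      Nat.card {y : Fin q → Fin k → ZMod 2 //
          ∀ i, Matrix.fromRows (hankel s k p.1) (hankel (s + m) k p.2) *ᵥ y i = 0}
        = 2 ^ (q * (k - (Matrix.fromRows (hankel s k p.1) (hankel (s + m) k p.2)).rank)) := by
    intro p
    set D := Matrix.fromRows (hankel s k p.1) (hankel (s + m) k p.2) with hD
    have e : Nat.card {y : Fin q → Fin k → ZMod 2 // ∀ i, D *ᵥ y i = 0}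
        = Nat.card (Fin q → {x : Fin k → ZMod 2 // D *ᵥ x = 0}) :=
      Nat.card_congr ⟨fun y i => ⟨y.1 i, y.2 i⟩, fun w => ⟨fun i => (w i).1, fun i => (w i).2⟩,
        fun y => rfl, fun w => rfl⟩
    have hcard := (card_ker_eq D).1
    rw [Fintype.card_fin] at hcard
    rw [e, Nat.card_fun, hcard, Nat.card_eq_fintype_card, Fintype.card_fin, ← pow_mul,
      mul_comm (k - D.rank) q]
  -- Step G: group the pairs by rank.
  have hrank : ∀ p : (Fin (s + k - 1) → ZMod 2) × (Fin (s + m + k - 1) → ZMod 2),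
      (Matrix.fromRows (hankel s k p.1) (hankel (s + m) k p.2)).rank
        ∈ Finset.range (min (2 * s + m) k + 1) := by
    intro p
    rw [Finset.mem_range, Nat.lt_succ_iff, le_min_iff]
    constructor
    · have h := Matrix.rank_le_card_height (Matrix.fromRows (hankel s k p.1) (hankel (s + m) k p.2))
      simp only [Fintype.card_sum, Fintype.card_fin] at h
      generalize (Matrix.fromRows (hankel s k p.1) (hankel (s + m) k p.2)).rank = r at h ⊢
      clear * - h
      omega
    · have h := Matrix.rank_le_card_width (Matrix.fromRows (hankel s k p.1) (hankel (s + m) k p.2))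
      simpa using h
  have hgroup : (∑ p : (Fin (s + k - 1) → ZMod 2) × (Fin (s + m + k - 1) → ZMod 2),
        2 ^ (q * (k - (Matrix.fromRows (hankel s k p.1) (hankel (s + m) k p.2)).rank)))
      = ∑ i ∈ Finset.range (min (2 * s + m) k + 1), Gamma s (s + m) k i * 2 ^ (q * (k - i)) := by
    rw [← Finset.sum_fiberwise_of_maps_to (fun p _ => hrank p)
      (fun p => (2:ℕ) ^ (q * (k - (Matrix.fromRows (hankel s k p.1) (hankel (s + m) k p.2)).rank)))]
    refine Finset.sum_congr rfl fun i hi => ?_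
    rw [Finset.sum_congr rfl (fun p hp => by rw [(Finset.mem_filter.1 hp).2]),
      Finset.sum_const, smul_eq_mul]
    congr 1
    rw [Gamma, Nat.card_eq_fintype_card, Fintype.card_subtype]
  -- Put everything together.
  have main : Rq q k s m * (2 ^ (s + k - 1) * 2 ^ (s + m + k - 1))
      = (∑ i ∈ Finset.range (min (2 * s + m) k + 1), Gamma s (s + m) k i * 2 ^ (q * (k - i)))
        * (2 ^ (q * s) * 2 ^ (q * (s + m))) := by
    rw [hsum]
    congr 1
    rw [Finset.sum_congr rfl (fun y _ => hprod y), hswap,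
      Finset.sum_congr rfl (fun p _ => hker p), hgroup]
  -- Final arithmetic.
  apply Nat.eq_of_mul_eq_mul_right (show 0 < 2 ^ (s + k - 1) * 2 ^ (s + m + k - 1) by positivity)
  calc 2 ^ k * Rq q k s m * (2 ^ (s + k - 1) * 2 ^ (s + m + k - 1))
      = 2 ^ k * (Rq q k s m * (2 ^ (s + k - 1) * 2 ^ (s + m + k - 1))) := by ring
    _ = 2 ^ k * ((∑ i ∈ Finset.range (min (2 * s + m) k + 1),
          Gamma s (s + m) k i * 2 ^ (q * (k - i))) * (2 ^ (q * s) * 2 ^ (q * (s + m)))) := by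
        rw [main]
    _ = 4 * (∑ i ∈ Finset.range (min (2 * s + m) k + 1),
          Gamma s (s + m) k i * 2 ^ ((2 * s + m + k) * (q - 1) - q * i)) *
        (2 ^ (s + k - 1) * 2 ^ (s + m + k - 1)) := by
        rw [Finset.mul_sum, Finset.sum_mul, Finset.mul_sum, Finset.sum_mul]
        refine Finset.sum_congr rfl fun i hi => ?_
        have hiK : i ≤ k := by
          rw [Finset.mem_range] at hi
          clear * - hi
          omega
        have h4 := key2 i hi
        have e1 : q * (k - i) = q * k - q * i := Nat.mul_sub q k i
        have e2 : (2 * s + m + k) * (q - 1) = q * (2 * s + m) + q * k - (2 * s + m + k) := by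
          rw [Nat.mul_sub, mul_one, show (2 * s + m + k) * q = q * (2 * s + m) + q * k by ring]
        have e4 : q * i ≤ q * k := Nat.mul_le_mul_left q hiK
        have e5 : 2 * s + m + k ≤ q * (2 * s + m) + q * k := by
          have ha : 2 * s + m ≤ q * (2 * s + m) :=
            Nat.le_mul_of_pos_left _ (by clear * - hq; omega)
          have hb : k ≤ q * k := Nat.le_mul_of_pos_left _ (by clear * - hq; omega)
          clear * - ha hb
          omega
        rw [e2] at h4
        calc 2 ^ k * (Gamma s (s + m) k i * 2 ^ (q * (k - i)) * (2 ^ (q * s) * 2 ^ (q * (s + m))))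
            = Gamma s (s + m) k i
              * 2 ^ (q * (k - i) + (q * s + (q * (s + m) + k))) := by
              rw [pow_add, pow_add, pow_add]; ring
          _ = Gamma s (s + m) k i
              * 2 ^ (2 + ((2 * s + m + k) * (q - 1) - q * i) + (s + k - 1 + (s + m + k - 1))) := by
              have hE : q * (k - i) + (q * s + (q * (s + m) + k))
                  = 2 + ((2 * s + m + k) * (q - 1) - q * i) + (s + k - 1 + (s + m + k - 1)) := by
                rw [e1, e2]
                have e3 : q * s + q * (s + m) = q * (2 * s + m) := by ring
                clear * - h4 e4 e5 e3 hs hk hq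
                generalize q * i = ai at h4 e4 ⊢
                generalize q * k = ak at h4 e4 e5 ⊢
                generalize hc1 : q * s = c1 at e3 ⊢
                generalize hc2 : q * (s + m) = c2 at e3 ⊢
                generalize q * (2 * s + m) = c3 at e3 h4 e5 ⊢
                omega
              rw [hE]
          _ = 4 * (Gamma s (s + m) k i * 2 ^ ((2 * s + m + k) * (q - 1) - q * i)) *
              (2 ^ (s + k - 1) * 2 ^ (s + m + k - 1)) := by
              rw [show (4:ℕ) = 2 ^ 2 by norm_num, pow_add, pow_add, pow_add]; ring
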